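/- Assume all rewards are nonnegative (r_t(s) ≥ 0 for all t, s). Fix 1 ≤ i < j ≤ H, a state s ∈ S, constants c₁, c₂ ≥ 0, and a subset N ⊆ S such that p_i(s,s') = 0 and p̃_i(s,s') = 0 for all s' ∉ N. If |p_i(s,s') − p̃_i(s,s')| ≤ c₁ + c₂·√(p̃_i(s,s')(1−p̃_i(s,s'))) for all s' ∈ N, then |((P_i − P̃_i) Ṽ_{i+1:j})(s)| ≤ c₁·|N|·‖Ṽ_{i+1:j}‖_∞ + c₂·√|N|·σ̃_{i:j}(s), where ‖f‖_∞ := max_{s'∈S} |f(s')|. -/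
import Mathlib


open Finset

/-- The operator `(P_t f)(s) = ∑_{s'} p_t(s,s') f(s')` induced by transition matrices `p`. -/
noncomputable def Pop {S : Type*} [Fintype S] (p : ℕ → S → S → ℝ) (t : ℕ) (f : S → ℝ) (s : S) : ℝ :=
  ∑ s', p t s s' * f s'

/-- The multi-step operator `P_{i:j} = P_i P_{i+1} ⋯ P_j` (identity when `j < i`). -/
noncomputable def PC {S : Type*} [Fintype S] (p : ℕ → S → S → ℝ) (i j : ℕ) (f : S → ℝ) : S → ℝ :=
  (List.range' i (j + 1 - i)).foldr (fun t g => Pop p t g) f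

/-- The value function: `V_{j:j} = r_j`, `V_{i:j} = r_i + P_i V_{i+1:j}` for `i < j`. -/
noncomputable def Vf {S : Type*} [Fintype S] (p : ℕ → S → S → ℝ) (r : ℕ → S → ℝ)
    (i j : ℕ) : S → ℝ :=
  if _h : i < j then fun s => r i s + Pop p i (Vf p r (i + 1) j) s
  else r j
termination_by j - i
decreasing_by omega

/-- The local variance of the value function:
`σ²_{i:j}(s) = ∑_{s'} p_i(s,s') (V_{i+1:j}(s') − (P_i V_{i+1:j})(s))²` for `i < j`, and `0` else. -/
noncomputable def sigmaSq {S : Type*} [Fintype S] (p : ℕ → S → S → ℝ) (r : ℕ → S → ℝ)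
    (i j : ℕ) (s : S) : ℝ :=
  if i < j then
    ∑ s', p i s s' * (Vf p r (i + 1) j s' - Pop p i (Vf p r (i + 1) j) s) ^ 2
  else 0

/-- The sup-norm `‖f‖_∞ = max_{s} |f s|` of a function on a finite nonempty type. -/
noncomputable def supNorm {S : Type*} [Fintype S] [Nonempty S] (f : S → ℝ) : ℝ :=
  Finset.univ.sup' Finset.univ_nonempty (fun s => |f s|)

/-- Bound on the difference of the expected optimistic value of successor states under
the true and the optimistic model, in terms of the local variance. -/
lemma Vf_nonneg {S : Type*} [Fintype S] (q : ℕ → S → S → ℝ) (r : ℕ → S → ℝ)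
    (hr : ∀ t, ∀ s : S, 0 ≤ r t s) (i j : ℕ)
    (hq : ∀ t, i ≤ t → t < j → ∀ s s', 0 ≤ q t s s') (s : S) :
    0 ≤ Vf q r i j s := by
  rw [Vf]
  split
  · rename_i h
    have h1 : 0 ≤ Pop q i (Vf q r (i + 1) j) s := by
      apply Finset.sum_nonneg
      intro s' _
      exact mul_nonneg (hq i le_rfl h s s')
        (Vf_nonneg q r hr (i + 1) j (fun t ht htj => hq t (by omega) htj) s')
    exact add_nonneg (hr i s) h1
  · exact hr j s
termination_by j - i
decreasing_by omega

theorem expected_value_difference_bound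
    {S : Type*} [Fintype S] [Nonempty S] (H : ℕ) (hH : 1 ≤ H)
    (r : ℕ → S → ℝ) (p q : ℕ → S → S → ℝ)
    (hr : ∀ t, ∀ s : S, 0 ≤ r t s)
    (hp_nonneg : ∀ t, 1 ≤ t → t ≤ H → ∀ s s', 0 ≤ p t s s')
    (hp_sum : ∀ t, 1 ≤ t → t ≤ H → ∀ s, ∑ s', p t s s' = 1)
    (hq_nonneg : ∀ t, 1 ≤ t → t ≤ H → ∀ s s', 0 ≤ q t s s')
    (hq_sum : ∀ t, 1 ≤ t → t ≤ H → ∀ s, ∑ s', q t s s' = 1)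
    (i j : ℕ) (hi : 1 ≤ i) (hij : i < j) (hj : j ≤ H) (s : S)
    (c₁ c₂ : ℝ) (hc₁ : 0 ≤ c₁) (hc₂ : 0 ≤ c₂)
    (N : Finset S)
    (hsupp : ∀ s' ∉ N, p i s s' = 0 ∧ q i s s' = 0)
    (hbound : ∀ s' ∈ N,
      |p i s s' - q i s s'| ≤ c₁ + c₂ * Real.sqrt (q i s s' * (1 - q i s s'))) :
    |Pop p i (Vf q r (i + 1) j) s - Pop q i (Vf q r (i + 1) j) s| ≤
      c₁ * N.card * supNorm (Vf q r (i + 1) j) +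
        c₂ * Real.sqrt N.card * Real.sqrt (sigmaSq q r i j s) := by
  set V : S → ℝ := Vf q r (i + 1) j with hV
  set m : ℝ := Pop q i V s with hm
  have hqnn : ∀ s', 0 ≤ q i s s' := fun s' => hq_nonneg i hi (by omega) s s'
  have hpnn : ∀ s', 0 ≤ p i s s' := fun s' => hp_nonneg i hi (by omega) s s'
  have hVnn : ∀ s', 0 ≤ V s' :=
    fun s' => Vf_nonneg q r hr (i + 1) j
      (fun t ht htj => hq_nonneg t (by omega) (by omega)) s'
  have hVle : ∀ s', V s' ≤ supNorm V := fun s' =>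
    le_trans (le_abs_self _) (Finset.le_sup' (fun x => |V x|) (Finset.mem_univ s'))
  have hsupnn : 0 ≤ supNorm V :=
    le_trans (abs_nonneg _) (Finset.le_sup' (fun x => |V x|) (Finset.mem_univ (Classical.arbitrary S)))
  have hmnn : 0 ≤ m := Finset.sum_nonneg fun s' _ => mul_nonneg (hqnn s') (hVnn s')
  have hmle : m ≤ supNorm V := by
    calc m ≤ ∑ s', q i s s' * supNorm V :=
          Finset.sum_le_sum fun s' _ => mul_le_mul_of_nonneg_left (hVle s') (hqnn s')
      _ = supNorm V := by
          rw [← Finset.sum_mul, hq_sum i hi (by omega) s, one_mul]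
  have hdev : ∀ s', |V s' - m| ≤ supNorm V := fun s' => by
    rw [abs_sub_le_iff]
    constructor
    · linarith [hVle s', hmnn]
    · linarith [hVnn s', hmle]
  -- sums over N equal sums over univ
  have hpN : ∑ s' ∈ N, p i s s' = 1 := by
    rw [Finset.sum_subset (Finset.subset_univ N)
      (fun x _ hx => (hsupp x hx).1)]
    exact hp_sum i hi (by omega) s
  have hqN : ∑ s' ∈ N, q i s s' = 1 := by
    rw [Finset.sum_subset (Finset.subset_univ N)
      (fun x _ hx => (hsupp x hx).2)]
    exact hq_sum i hi (by omega) s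
  have hdiff : Pop p i V s - Pop q i V s = ∑ s' ∈ N, (p i s s' - q i s s') * (V s' - m) := by
    have h1 : Pop p i V s - Pop q i V s = ∑ s', (p i s s' - q i s s') * V s' := by
      simp [Pop, ← Finset.sum_sub_distrib, sub_mul]
    have h2 : ∑ s', (p i s s' - q i s s') * V s' = ∑ s' ∈ N, (p i s s' - q i s s') * V s' := by
      rw [Finset.sum_subset (Finset.subset_univ N)]
      intro x _ hx
      rw [(hsupp x hx).1, (hsupp x hx).2]; ring
    rw [h1, h2]
    have h3 : ∑ s' ∈ N, (p i s s' - q i s s') * m = 0 := by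
      rw [← Finset.sum_mul, Finset.sum_sub_distrib, hpN, hqN]; ring
    calc ∑ s' ∈ N, (p i s s' - q i s s')*V s'
        = ∑ s' ∈ N, (p i s s' - q i s s')*(V s' - m) + ∑ s' ∈ N, (p i s s' - q i s s')*m := by
          rw [← Finset.sum_add_distrib]; apply Finset.sum_congr rfl; intros; ring
      _ = _ := by rw [h3, add_zero]
  rw [hdiff]
  have hσ : sigmaSq q r i j s = ∑ s', q i s s' * (V s' - m) ^ 2 := by
    rw [sigmaSq, if_pos hij]
  have hσnn : 0 ≤ sigmaSq q r i j s := by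
    rw [hσ]
    exact Finset.sum_nonneg fun s' _ => mul_nonneg (hqnn s') (sq_nonneg _)
  calc |∑ s' ∈ N, (p i s s' - q i s s') * (V s' - m)|
      ≤ ∑ s' ∈ N, |p i s s' - q i s s'| * |V s' - m| := by
        refine le_trans (Finset.abs_sum_le_sum_abs _ _) ?_
        apply Finset.sum_le_sum
        intro s' _
        rw [abs_mul]
    _ ≤ ∑ s' ∈ N, (c₁ + c₂ * Real.sqrt (q i s s' * (1 - q i s s'))) * |V s' - m| := by
        apply Finset.sum_le_sum
        intro s' hs'
        exact mul_le_mul_of_nonneg_right (hbound s' hs') (abs_nonneg _)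
    _ = ∑ s' ∈ N, c₁ * |V s' - m|
        + ∑ s' ∈ N, c₂ * (Real.sqrt (q i s s' * (1 - q i s s')) * |V s' - m|) := by
        rw [← Finset.sum_add_distrib]; apply Finset.sum_congr rfl; intros; ring
    _ ≤ c₁ * N.card * supNorm V
        + c₂ * Real.sqrt N.card * Real.sqrt (sigmaSq q r i j s) := by
        gcongr ?_ + ?_
        · calc ∑ s' ∈ N, c₁ * |V s' - m| ≤ ∑ s' ∈ N, c₁ * supNorm V :=
              Finset.sum_le_sum fun s' _ => mul_le_mul_of_nonneg_left (hdev s') hc₁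
            _ = c₁ * N.card * supNorm V := by
              rw [Finset.sum_const, nsmul_eq_mul]; ring
        · rw [← Finset.mul_sum, mul_assoc]
          apply mul_le_mul_of_nonneg_left _ hc₂
          have hstep : ∀ s' ∈ N, Real.sqrt (q i s s' * (1 - q i s s')) * |V s' - m|
              ≤ Real.sqrt (q i s s') * |V s' - m| := by
            intro s' _
            apply mul_le_mul_of_nonneg_right _ (abs_nonneg _)
            apply Real.sqrt_le_sqrt
            nlinarith [hqnn s', sq_nonneg (q i s s')]
          refine le_trans (Finset.sum_le_sum hstep) ?_
          have hCS : (∑ s' ∈ N, Real.sqrt (q i s s') * |V s' - m|) ^ 2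
              ≤ (N.card : ℝ) * ∑ s' ∈ N, q i s s' * (V s' - m) ^ 2 := by
            have := Finset.sum_mul_sq_le_sq_mul_sq N (fun _ => (1 : ℝ))
              (fun s' => Real.sqrt (q i s s') * |V s' - m|)
            simp only [one_mul, one_pow, Finset.sum_const, nsmul_eq_mul, mul_one] at this
            refine le_trans this ?_
            apply mul_le_mul_of_nonneg_left _ (Nat.cast_nonneg _)
            apply le_of_eq
            apply Finset.sum_congr rfl
            intro s' _
            rw [mul_pow, Real.sq_sqrt (hqnn s'), sq_abs]
          have hsum_le : ∑ s' ∈ N, q i s s' * (V s' - m) ^ 2 ≤ sigmaSq q r i j s := by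
            rw [hσ]
            apply Finset.sum_le_sum_of_subset_of_nonneg (Finset.subset_univ N)
            intro x _ _
            exact mul_nonneg (hqnn x) (sq_nonneg _)
          have hnn : 0 ≤ ∑ s' ∈ N, Real.sqrt (q i s s') * |V s' - m| :=
            Finset.sum_nonneg fun s' _ => mul_nonneg (Real.sqrt_nonneg _) (abs_nonneg _)
          calc ∑ s' ∈ N, Real.sqrt (q i s s') * |V s' - m|
              = Real.sqrt ((∑ s' ∈ N, Real.sqrt (q i s s') * |V s' - m|) ^ 2) := by
                rw [Real.sqrt_sq hnn]
            _ ≤ Real.sqrt ((N.card : ℝ) * sigmaSq q r i j s) := by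
                apply Real.sqrt_le_sqrt
                refine le_trans hCS ?_
                exact mul_le_mul_of_nonneg_left hsum_le (Nat.cast_nonneg _)
            _ = Real.sqrt N.card * Real.sqrt (sigmaSq q r i j s) := by
                rw [Real.sqrt_mul (Nat.cast_nonneg _)]
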